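/- Let f : (Fin n → ℝ) → ℝ be a finite convex function (ConvexOn ℝ univ f) and g : (Fin n → ℝ) → ℝ a finite concave function (ConcaveOn ℝ univ g). Then, as extended reals, ⨅ x, ((f x − g x : ℝ) : EReal) = ⨆ c, g*(c) − f*(c), where f*(c) = ⨆ x, ((⟪c,x⟫ − f x : ℝ) : EReal) is the convex conjugate of f and g*(c) = ⨅ x, ((⟪c,x⟫ − g x : ℝ) : EReal) is the concave conjugate of g, and g*(c) − f*(c) is computed in EReal as g*(c) + (−f*(c)). -/

import Mathlib

open Matrix

/-- Fenchel duality for a finite convex function `f` and a finite concave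
function `g`: `inf (f - g) = sup (g* - f*)`, computed in the extended reals. -/
theorem fenchel_duality (n : ℕ) (f g : (Fin n → ℝ) → ℝ)
    (hf : ConvexOn ℝ Set.univ f) (hg : ConcaveOn ℝ Set.univ g) :
    (⨅ x : Fin n → ℝ, ((f x - g x : ℝ) : EReal)) =
      ⨆ c : Fin n → ℝ,
        (⨅ x : Fin n → ℝ, ((c ⬝ᵥ x - g x : ℝ) : EReal)) +
          (-(⨆ x : Fin n → ℝ, ((c ⬝ᵥ x - f x : ℝ) : EReal))) := by
  classical
  refine le_antisymm ?_ ?_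
  · -- LHS ≤ RHS
    by_cases hbd : BddBelow (Set.range fun x => f x - g x)
    · -- bounded below case: real infimum m
      set m : ℝ := sInf (Set.range fun x => f x - g x) with hm
      have hmle : ∀ x, m ≤ f x - g x := fun x => csInf_le hbd ⟨x, rfl⟩
      -- continuity of f
      have hfc : Continuous f := by
        have := hf.continuousOn isOpen_univ
        rwa [← continuousOn_univ]
      -- separation of strict epigraph of f and hypograph of g + m
      set A : Set ((Fin n → ℝ) × ℝ) := {p | f p.1 < p.2} with hA
      set B : Set ((Fin n → ℝ) × ℝ) := {p | p.2 ≤ g p.1 + m} with hB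
      have hAo : IsOpen A := isOpen_lt (hfc.comp continuous_fst) continuous_snd
      have hAc : Convex ℝ A := by
        rintro ⟨x, s⟩ hx ⟨y, t⟩ hy a b ha hb hab
        simp only [hA, Set.mem_setOf_eq, Prod.smul_mk, Prod.mk_add_mk, smul_eq_mul] at hx hy ⊢
        have hc := hf.2 (Set.mem_univ x) (Set.mem_univ y) ha hb hab
        simp only [smul_eq_mul] at hc
        rcases eq_or_lt_of_le ha with h0 | h0
        · have hb1 : b = 1 := by linarith
          have : a • x + b • y = y := by rw [← h0, hb1]; simp
          rw [this, ← h0, hb1]; simpa using hy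
        · have h1 : a * f x < a * s := by exact mul_lt_mul_of_pos_left hx h0
          have h2 : b * f y ≤ b * t := mul_le_mul_of_nonneg_left hy.le hb
          linarith
      have hBc : Convex ℝ B := by
        rintro ⟨x, s⟩ hx ⟨y, t⟩ hy a b ha hb hab
        simp only [hB, Set.mem_setOf_eq, Prod.smul_mk, Prod.mk_add_mk, smul_eq_mul] at hx hy ⊢
        have hc := hg.2 (Set.mem_univ x) (Set.mem_univ y) ha hb hab
        simp only [smul_eq_mul] at hc
        have h1 : a * s ≤ a * (g x + m) := mul_le_mul_of_nonneg_left hx ha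
        have h2 : b * t ≤ b * (g y + m) := mul_le_mul_of_nonneg_left hy hb
        have h3 : a * m + b * m = m := by rw [← add_mul, hab, one_mul]
        nlinarith
      have hdisj : Disjoint A B := by
        rw [Set.disjoint_left]
        rintro ⟨x, t⟩ hxA hxB
        simp only [hA, hB, Set.mem_setOf_eq] at hxA hxB
        have := hmle x
        linarith
      obtain ⟨φ, u, hφA, hφB⟩ := geometric_hahn_banach_open hAc hAo hBc hdisj
      set β : ℝ := φ (0, 1) with hβdef
      have hφ_split : ∀ (x : Fin n → ℝ) (t : ℝ), φ (x, t) = φ (x, 0) + t * β := by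
        intro x t
        have hxt : ((x, t) : (Fin n → ℝ) × ℝ) = (x, 0) + t • ((0 : Fin n → ℝ), (1 : ℝ)) := by
          simp [Prod.ext_iff]
        rw [hxt, map_add, φ.map_smul, smul_eq_mul]
      have hβle : β ≤ 0 := by
        by_contra hpos
        push_neg at hpos
        set T : ℝ := max (f 0 + 1) ((u - φ ((0 : Fin n → ℝ), (0:ℝ))) / β + 1) with hT
        have hTf : f 0 < T := lt_of_lt_of_le (by linarith) (le_max_left _ _)
        have h2 := hφA ((0 : Fin n → ℝ), T) hTf
        rw [hφ_split] at h2
        have h3 : (u - φ ((0 : Fin n → ℝ), (0:ℝ))) / β + 1 ≤ T := le_max_right _ _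
        have h4 : (u - φ ((0 : Fin n → ℝ), (0:ℝ))) / β * β = u - φ ((0 : Fin n → ℝ), (0:ℝ)) :=
          div_mul_cancel₀ _ (ne_of_gt hpos)
        nlinarith [mul_le_mul_of_nonneg_right h3 hpos.le]
      have hβne : β ≠ 0 := by
        intro h0
        have h1 := hφA ((0 : Fin n → ℝ), f 0 + 1) (by simp [hA])
        rw [hφ_split] at h1
        have h2 := hφB ((0 : Fin n → ℝ), g 0 + m) (by simp [hB])
        rw [hφ_split] at h2
        rw [h0] at h1 h2
        linarith
      have hβneg : β < 0 := lt_of_le_of_ne hβle hβne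
      set k : ℝ := (-β)⁻¹ with hk
      have hkpos : 0 < k := inv_pos.mpr (by linarith)
      have hkβ : k * β = -1 := by
        rw [hk]
        field_simp
      -- the separating slope
      set c : Fin n → ℝ := fun i => k * φ ((fun j => if i = j then (1:ℝ) else 0), (0:ℝ)) with hc
      set v : ℝ := k * u with hv
      have hdot : ∀ x : Fin n → ℝ, c ⬝ᵥ x = k * φ (x, 0) := by
        intro x
        set Llin : ((Fin n → ℝ) →ₗ[ℝ] ℝ) :=
          φ.toLinearMap.comp (LinearMap.inl ℝ (Fin n → ℝ) ℝ) with hL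
        have h1 := LinearMap.pi_apply_eq_sum_univ Llin x
        have h2 : ∀ y : Fin n → ℝ, Llin y = φ (y, 0) := fun y => rfl
        simp only [h2, smul_eq_mul] at h1
        simp only [dotProduct, hc, h1, Finset.mul_sum]
        refine Finset.sum_congr rfl fun i _ => by ring
      have key1 : ∀ x : Fin n → ℝ, c ⬝ᵥ x - f x ≤ v := by
        intro x
        rw [hdot x]
        by_contra hcon
        push_neg at hcon
        set ε : ℝ := k * φ (x, 0) - f x - v with hε
        have hεpos : 0 < ε := by rw [hε]; linarith
        have hA1 := hφA (x, f x + ε) (by simp [hA]; linarith)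
        rw [hφ_split] at hA1
        have hmul := mul_lt_mul_of_pos_left hA1 hkpos
        have hexp : k * (φ (x, 0) + (f x + ε) * β) = k * φ (x, 0) + (f x + ε) * (k * β) := by
          ring
        rw [hexp, hkβ] at hmul
        linarith [hε, hv]
      have key2 : ∀ x : Fin n → ℝ, m + v ≤ c ⬝ᵥ x - g x := by
        intro x
        rw [hdot x]
        have hB1 := hφB (x, g x + m) (by simp [hB])
        rw [hφ_split] at hB1
        have hmul := mul_le_mul_of_nonneg_left hB1 hkpos.le
        have hexp : k * (φ (x, 0) + (g x + m) * β) = k * φ (x, 0) + (g x + m) * (k * β) := by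
          ring
        rw [hexp, hkβ] at hmul
        linarith [hv]
      -- assemble
      have hLHS : (⨅ x : Fin n → ℝ, ((f x - g x : ℝ) : EReal)) = ((m : ℝ) : EReal) := by
        rw [hm]
        have := Monotone.map_ciInf_of_continuousAt (f := Real.toEReal)
          (g := fun x : Fin n → ℝ => f x - g x)
          (continuous_coe_real_ereal.continuousAt) (EReal.coe_strictMono.monotone) hbd
        rw [← this, iInf]
      rw [hLHS]
      refine le_iSup_of_le c ?_
      have hgstar : ((m + v : ℝ) : EReal) ≤ ⨅ x : Fin n → ℝ, ((c ⬝ᵥ x - g x : ℝ) : EReal) :=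
        le_iInf fun x => EReal.coe_le_coe_iff.mpr (key2 x)
      have hfstar : (⨆ x : Fin n → ℝ, ((c ⬝ᵥ x - f x : ℝ) : EReal)) ≤ ((v : ℝ) : EReal) :=
        iSup_le fun x => EReal.coe_le_coe_iff.mpr (by linarith [key1 x])
      have hneg : ((-v : ℝ) : EReal) ≤ -(⨆ x : Fin n → ℝ, ((c ⬝ᵥ x - f x : ℝ) : EReal)) := by
        rw [EReal.coe_neg]
        exact EReal.neg_le_neg_iff.mpr hfstar
      calc ((m : ℝ) : EReal) = ((m + v : ℝ) : EReal) + ((-v : ℝ) : EReal) := by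
            rw [← EReal.coe_add]; norm_num
        _ ≤ _ := add_le_add hgstar hneg
    · -- unbounded below: LHS = ⊥
      have hbot : (⨅ x : Fin n → ℝ, ((f x - g x : ℝ) : EReal)) = ⊥ := by
        refine iInf_eq_bot.mpr fun b hb => ?_
        induction b using EReal.rec with
        | bot => exact absurd hb (lt_irrefl _)
        | coe r =>
          obtain ⟨y, ⟨x, rfl⟩, hy⟩ := not_bddBelow_iff.mp hbd r
          exact ⟨x, EReal.coe_lt_coe_iff.mpr hy⟩
        | top => exact ⟨0, EReal.coe_lt_top _⟩
      rw [hbot]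
      exact bot_le
  · -- weak duality: RHS ≤ LHS
    refine iSup_le fun c => le_iInf fun x => ?_
    have h1 : (⨅ y : Fin n → ℝ, ((c ⬝ᵥ y - g y : ℝ) : EReal)) ≤ ((c ⬝ᵥ x - g x : ℝ) : EReal) :=
      iInf_le (fun y : Fin n → ℝ => ((c ⬝ᵥ y - g y : ℝ) : EReal)) x
    have h2 : ((c ⬝ᵥ x - f x : ℝ) : EReal) ≤ ⨆ y : Fin n → ℝ, ((c ⬝ᵥ y - f y : ℝ) : EReal) :=
      le_iSup (fun y : Fin n → ℝ => ((c ⬝ᵥ y - f y : ℝ) : EReal)) x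
    have h3 : -(⨆ y : Fin n → ℝ, ((c ⬝ᵥ y - f y : ℝ) : EReal)) ≤ ((-(c ⬝ᵥ x - f x) : ℝ) : EReal) := by
      rw [EReal.coe_neg]
      exact EReal.neg_le_neg_iff.mpr h2
    calc (⨅ y : Fin n → ℝ, ((c ⬝ᵥ y - g y : ℝ) : EReal)) +
          (-(⨆ y : Fin n → ℝ, ((c ⬝ᵥ y - f y : ℝ) : EReal)))
        ≤ ((c ⬝ᵥ x - g x : ℝ) : EReal) + ((-(c ⬝ᵥ x - f x) : ℝ) : EReal) := add_le_add h1 h3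
      _ = ((f x - g x : ℝ) : EReal) := by rw [← EReal.coe_add]; norm_cast; ring
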